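/- arXiv:2209.14215 — 2 statements merged into one kernel-verified Lean document; each statement's English description precedes it below -/
import Mathlib

section
/- Let ψ : ℂ → ℂ be differentiable in the real sense. Then ψ satisfies the lowest Landau level equation ∂̄ψ(z) = −(z/2)·ψ(z) for all z ∈ ℂ if and only if there exists an entire function φ : ℂ → ℂ such that ψ(z) = φ(z) · e^{−|z|²/2} for all z. (Characterization of the lowest Landau level as Bargmann space.) -/
open MeasureTheory

/-- The antiholomorphic Wirtinger derivative `∂̄f(z) = (Df(z)(1) + i·Df(z)(i))/2`. -/
noncomputable def wirtingerDBar (f : ℂ → ℂ) (z : ℂ) : ℂ :=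
  (fderiv ℝ f z 1 + Complex.I * fderiv ℝ f z Complex.I) / 2

private lemma wirtingerDBar_mul (f g : ℂ → ℂ) (z : ℂ)
    (hf : DifferentiableAt ℝ f z) (hg : DifferentiableAt ℝ g z) :
    wirtingerDBar (fun w => f w * g w) z
      = wirtingerDBar f z * g z + f z * wirtingerDBar g z := by
  unfold wirtingerDBar
  rw [fderiv_fun_mul hf hg]
  simp only [ContinuousLinearMap.add_apply, ContinuousLinearMap.smul_apply, smul_eq_mul]
  ring

/-- derivative of the gaussian-type function `w ↦ exp (a * (w * conj w))`. -/
private lemma hasFDerivAt_gauss (a z : ℂ) :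
    HasFDerivAt (fun w : ℂ => Complex.exp (a * (w * (starRingEnd ℂ) w)))
      (Complex.exp (a * (z * (starRingEnd ℂ) z)) •
        (a • (z • Complex.conjCLE.toContinuousLinearMap
          + ((starRingEnd ℂ) z) • ContinuousLinearMap.id ℝ ℂ))) z := by
  have h1 : HasFDerivAt (fun w : ℂ => w) (ContinuousLinearMap.id ℝ ℂ) z := hasFDerivAt_id z
  have h2 : HasFDerivAt (fun w : ℂ => (starRingEnd ℂ) w)
      Complex.conjCLE.toContinuousLinearMap z := Complex.conjCLE.hasFDerivAt
  have h3 := (h1.fun_mul h2).const_mul a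
  have h4 := h3.cexp
  convert h4 using 1

private lemma diffR_gauss (a : ℂ) :
    Differentiable ℝ (fun w : ℂ => Complex.exp (a * (w * (starRingEnd ℂ) w))) :=
  fun z => (hasFDerivAt_gauss a z).differentiableAt

private lemma wirtingerDBar_gauss (a z : ℂ) :
    wirtingerDBar (fun w : ℂ => Complex.exp (a * (w * (starRingEnd ℂ) w))) z
      = a * z * Complex.exp (a * (z * (starRingEnd ℂ) z)) := by
  unfold wirtingerDBar
  rw [(hasFDerivAt_gauss a z).fderiv]
  simp only [ContinuousLinearMap.smul_apply, ContinuousLinearMap.add_apply,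
    ContinuousLinearEquiv.coe_coe, Complex.conjCLE_apply, ContinuousLinearMap.id_apply,
    smul_eq_mul, map_one, Complex.conj_I]
  linear_combination (Complex.exp (a * (z * (starRingEnd ℂ) z)) * a
    * ((starRingEnd ℂ) z - z) / 2) * Complex.I_mul_I

/-- Cauchy–Riemann: vanishing `∂̄` gives complex differentiability. -/
private lemma diffC_of_dbar (f : ℂ → ℂ) (z : ℂ) (hf : DifferentiableAt ℝ f z)
    (h : wirtingerDBar f z = 0) : DifferentiableAt ℂ f z := by
  set L := fderiv ℝ f z with hL
  have hCR : L Complex.I = Complex.I * L 1 := by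
    unfold wirtingerDBar at h
    rw [← hL] at h
    have h' : L 1 + Complex.I * L Complex.I = 0 := by
      field_simp at h; rw [mul_zero] at h; exact h
    linear_combination (-Complex.I) * h' + (L Complex.I) * Complex.I_mul_I
  have key : HasFDerivAt f ((1 : ℂ →L[ℂ] ℂ).smulRight (L 1)) z := by
    apply hasFDerivAt_of_restrictScalars ℝ hf.hasFDerivAt
    ext w
    simp only [ContinuousLinearMap.coe_restrictScalars', ContinuousLinearMap.smulRight_apply,
      ContinuousLinearMap.one_apply, smul_eq_mul]
    have hw : w = (w.re : ℂ) * 1 + (w.im : ℂ) * Complex.I := by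
      simp [Complex.ext_iff]
    calc w * L 1 = (w.re : ℂ) * L 1 + (w.im : ℂ) * (Complex.I * L 1) := by
          conv_lhs => rw [hw]
          ring
      _ = (w.re : ℂ) * L 1 + (w.im : ℂ) * L Complex.I := by rw [hCR]
      _ = L ((w.re : ℝ) • (1:ℂ) + (w.im : ℝ) • Complex.I) := by
          rw [map_add, L.map_smul, L.map_smul]
          simp [Complex.real_smul]
      _ = L w := by
          congr 1
          simp only [Complex.real_smul, Complex.ofReal_re, mul_one]
          simp
  exact key.differentiableAt

/-- complex differentiability gives vanishing `∂̄`. -/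
private lemma dbar_of_diffC (f : ℂ → ℂ) (z : ℂ) (hf : DifferentiableAt ℂ f z) :
    wirtingerDBar f z = 0 := by
  have hd := hf.hasDerivAt.hasFDerivAt.restrictScalars ℝ
  unfold wirtingerDBar
  rw [hd.fderiv]
  simp only [ContinuousLinearMap.coe_restrictScalars', ContinuousLinearMap.smulRight_apply,
    ContinuousLinearMap.one_apply, ContinuousLinearMap.toSpanSingleton_apply, smul_eq_mul, one_mul]
  linear_combination (deriv f z / 2) * Complex.I_mul_I

private lemma real_exp_eq (a : ℂ) (w : ℂ) (ha : (a:ℂ) = -(1:ℂ)/2) :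
    ((Real.exp (-(‖w‖ ^ 2) / 2) : ℝ) : ℂ)
      = Complex.exp (a * (w * (starRingEnd ℂ) w)) := by
  rw [Complex.ofReal_exp, Complex.mul_conj, ha]
  congr 1
  push_cast [Complex.sq_norm]
  ring

/-- Characterization of the lowest Landau level as Bargmann space: a real-differentiable
`ψ : ℂ → ℂ` satisfies `∂̄ψ(z) = −(z/2)ψ(z)` for all `z` iff `ψ(z) = φ(z) e^(−|z|²/2)`
for some entire function `φ`. -/
theorem lowest_landau_level_iff_bargmann (ψ : ℂ → ℂ) (hψ : Differentiable ℝ ψ) :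
    (∀ z : ℂ, wirtingerDBar ψ z = -(z / 2) * ψ z) ↔
    ∃ φ : ℂ → ℂ, Differentiable ℂ φ ∧
      ∀ z : ℂ, ψ z = φ z * (Real.exp (-(‖z‖ ^ 2) / 2) : ℂ) := by
  constructor
  · intro h
    refine ⟨fun w => ψ w * Complex.exp (((1:ℂ)/2) * (w * (starRingEnd ℂ) w)), ?_, ?_⟩
    · intro z
      apply diffC_of_dbar _ _ ((hψ z).fun_mul ((diffR_gauss ((1:ℂ)/2)) z))
      rw [wirtingerDBar_mul _ _ z (hψ z) ((diffR_gauss ((1:ℂ)/2)) z), h z,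
        wirtingerDBar_gauss]
      ring
    · intro z
      rw [real_exp_eq (-(1:ℂ)/2) z rfl, mul_assoc, ← Complex.exp_add]
      have : (1:ℂ)/2 * (z * (starRingEnd ℂ) z) + -(1:ℂ)/2 * (z * (starRingEnd ℂ) z) = 0 := by ring
      rw [this, Complex.exp_zero, mul_one]
  · rintro ⟨φ, hφ, heq⟩
    intro z
    have hψeq : ψ = fun w => φ w * Complex.exp ((-(1:ℂ)/2) * (w * (starRingEnd ℂ) w)) := by
      funext w
      rw [heq w, real_exp_eq (-(1:ℂ)/2) w rfl]
    conv_lhs => rw [hψeq]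
    rw [wirtingerDBar_mul _ _ z ((hφ z).restrictScalars ℝ) ((diffR_gauss (-(1:ℂ)/2)) z),
      dbar_of_diffC _ _ (hφ z), wirtingerDBar_gauss, heq z, real_exp_eq (-(1:ℂ)/2) z rfl]
    ring
end

section
/- Let N ≥ 2 and let ψ ∈ MvPolynomial (Fin N) ℂ be symmetric (invariant under every permutation of the variables). Suppose that for every pair of distinct indices i ≠ j, the polynomial obtained from ψ by substituting X_j for X_i is zero (i.e. ψ vanishes on the hyperplane z_i = z_j). Then the Laughlin polynomial ∏_{i<j} (X_i − X_j)² divides ψ. (Characterization of fully correlated states: every bosonic state in the kernel of the contact interaction is a symmetric analytic multiple of the Laughlin state.) -/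
open MvPolynomial

/-- The Laughlin polynomial `∏_{i<j} (X_i − X_j)²` in `N` variables. -/
noncomputable def laughlin (N : ℕ) : MvPolynomial (Fin N) ℂ :=
  ∏ p ∈ Finset.univ.filter (fun p : Fin N × Fin N => p.1 < p.2),
    (X p.1 - X p.2) ^ 2

/-- Auxiliary: a product of `k`-th powers of pairwise non-associated primes
each dividing `n` to the `k`-th power divides `n`. -/
lemma prod_pow_dvd_of_primes {ι R : Type*} [CommMonoidWithZero R] [IsCancelMulZero R]
    (s : Finset ι) (f : ι → R) (k : ℕ) (n : R)
    (hp : ∀ i ∈ s, Prime (f i))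
    (hnd : ∀ i ∈ s, ∀ j ∈ s, i ≠ j → ¬ f i ∣ f j)
    (hd : ∀ i ∈ s, f i ^ k ∣ n) :
    (∏ i ∈ s, f i ^ k) ∣ n := by
  classical
  induction s using Finset.induction_on generalizing n with
  | empty => simpa using one_dvd n
  | @insert a s ha ih =>
    obtain ⟨m, hm⟩ := hd a (Finset.mem_insert_self a s)
    have hrest : ∀ i ∈ s, f i ^ k ∣ m := by
      intro i hi
      have hia : i ≠ a := by rintro rfl; exact ha hi
      have hpi : Prime (f i) := hp i (Finset.mem_insert_of_mem hi)
      have hndvd : ¬ f i ∣ f a ^ k := by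
        intro hdd
        exact hnd i (Finset.mem_insert_of_mem hi) a (Finset.mem_insert_self a s) hia
          (hpi.dvd_of_dvd_pow hdd)
      have : f i ^ k ∣ f a ^ k * m := hm ▸ hd i (Finset.mem_insert_of_mem hi)
      exact hpi.pow_dvd_of_dvd_mul_left k hndvd this
    have hprod : (∏ i ∈ s, f i ^ k) ∣ m :=
      ih m (fun i hi => hp i (Finset.mem_insert_of_mem hi))
        (fun i hi j hj hij => hnd i (Finset.mem_insert_of_mem hi) j
          (Finset.mem_insert_of_mem hj) hij) hrest
    rw [Finset.prod_insert ha, hm]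
    exact mul_dvd_mul dvd_rfl hprod

/-- The isomorphism pulling out the `i`-th variable. -/
noncomputable def phi {N : ℕ} (i : Fin N) :
    MvPolynomial (Fin N) ℂ ≃ₐ[ℂ] Polynomial (MvPolynomial {k : Fin N // k ≠ i} ℂ) :=
  (renameEquiv ℂ (Equiv.optionSubtypeNe i).symm).trans
    (optionEquivLeft ℂ {k : Fin N // k ≠ i})

lemma phi_X_self {N : ℕ} (i : Fin N) : phi i (X i) = Polynomial.X := by
  simp [phi, renameEquiv_apply, rename_X, Equiv.optionSubtypeNe_symm_self,
    optionEquivLeft_X_none]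

lemma phi_X_ne {N : ℕ} {i k : Fin N} (h : k ≠ i) :
    phi i (X k) = Polynomial.C (X ⟨k, h⟩) := by
  simp [phi, renameEquiv_apply, rename_X, Equiv.optionSubtypeNe_symm_of_ne h,
    optionEquivLeft_X_some]

set_option maxHeartbeats 1000000 in
/-- If `ψ` vanishes under the substitution `X i ↦ X j`, then `X i - X j ∣ ψ`. -/
lemma dvd_of_vanish {N : ℕ} (ψ : MvPolynomial (Fin N) ℂ) {i j : Fin N} (hij : j ≠ i)
    (h : aeval (fun k : Fin N => if k = i then X j else X k) ψ
        = (0 : MvPolynomial (Fin N) ℂ)) :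
    (X i - X j : MvPolynomial (Fin N) ℂ) ∣ ψ := by
  classical
  set v : Fin N → MvPolynomial (Fin N) ℂ := fun k => if k = i then X j else X k with hv
  set c : MvPolynomial {k : Fin N // k ≠ i} ℂ := X ⟨j, hij⟩ with hc
  set F : MvPolynomial (Fin N) ℂ →+* MvPolynomial {k : Fin N // k ≠ i} ℂ :=
    (Polynomial.evalRingHom c).comp (phi i).toAlgHom.toRingHom with hFdef
  have hF : F.comp (aeval v).toRingHom = F := by
    apply MvPolynomial.ringHom_ext
    · intro r
      simp [F, hv, aeval_C]
    · intro k
      by_cases hk : k = i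
      · subst hk
        simp only [RingHom.comp_apply, AlgHom.toRingHom_eq_coe, RingHom.coe_coe, aeval_X,
          hv, if_pos rfl, hFdef]
        simp [phi_X_self, phi_X_ne hij, hc]
      · simp [F, hv, hk]
  have key : Polynomial.eval c (phi i ψ) = 0 := by
    have h1 : F (aeval v ψ) = F ψ := by
      have := RingHom.congr_fun hF ψ
      simpa using this
    have h2 : F ψ = Polynomial.eval c (phi i ψ) := rfl
    rw [← h2, ← h1, h, map_zero]
  have hdvd : (Polynomial.X - Polynomial.C c) ∣ phi i ψ :=
    Polynomial.dvd_iff_isRoot.mpr key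
  have heq : phi i (X i - X j) = Polynomial.X - Polynomial.C c := by
    rw [map_sub, phi_X_self, phi_X_ne hij]
  have := map_dvd (phi i).symm.toAlgHom (heq ▸ hdvd)
  simpa using this

lemma prime_X_sub_X {N : ℕ} {i j : Fin N} (hij : j ≠ i) :
    Prime (X i - X j : MvPolynomial (Fin N) ℂ) := by
  rw [← MulEquiv.prime_iff (phi i).toMulEquiv]
  have heq : (phi i).toMulEquiv (X i - X j)
      = Polynomial.X - Polynomial.C (X ⟨j, hij⟩) := by
    show phi i (X i - X j) = _
    rw [map_sub, phi_X_self, phi_X_ne hij]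
  rw [heq]
  exact Polynomial.prime_X_sub_C _

lemma not_dvd_pair {N : ℕ} {p q : Fin N × Fin N} (hp : p.1 < p.2) (hq : q.1 < q.2)
    (hpq : p ≠ q) :
    ¬ ((X p.1 - X p.2 : MvPolynomial (Fin N) ℂ) ∣ (X q.1 - X q.2)) := by
  intro hdvd
  obtain ⟨v, hv0, hv1⟩ : ∃ v : Fin N → ℂ, v p.1 = v p.2 ∧ v q.1 ≠ v q.2 := by
    by_cases h1 : q.1 = p.1 ∨ q.1 = p.2
    · have hq2p1 : p.1 ≠ q.2 := by
        rcases h1 with h | h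
        · exact h ▸ (ne_of_lt hq)
        · exact ne_of_lt (lt_trans hp (h ▸ hq))
      have hq2p2 : p.2 ≠ q.2 := by
        rcases h1 with h | h
        · intro e; exact hpq (Prod.ext h.symm e)
        · exact h ▸ (ne_of_lt hq)
      refine ⟨fun k => if k = q.2 then 1 else 0, ?_, ?_⟩
      · simp [hq2p1, hq2p2]
      · simp [hq.ne]
    · push_neg at h1
      refine ⟨fun k => if k = q.1 then 1 else 0, ?_, ?_⟩
      · simp [(Ne.symm h1.1), (Ne.symm h1.2)]
      · simp [hq.ne']
  have hmap := map_dvd (eval v) hdvd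
  rw [map_sub, eval_X, eval_X, map_sub, eval_X, eval_X] at hmap
  have hz : v p.1 - v p.2 = 0 := by rw [hv0]; ring
  rw [hz] at hmap
  exact hv1 (sub_eq_zero.mp (zero_dvd_iff.mp hmap))

/-- Characterization of fully correlated states: a symmetric polynomial `ψ` in `N ≥ 2`
variables vanishing on every diagonal hyperplane `z_i = z_j` is divisible by the
Laughlin polynomial `∏_{i<j} (X_i − X_j)²`. -/
theorem fully_correlated_divisible_by_laughlin (N : ℕ) (hN : 2 ≤ N)
    (ψ : MvPolynomial (Fin N) ℂ)
    (hsymm : ∀ σ : Equiv.Perm (Fin N), rename σ ψ = ψ)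
    (hvanish : ∀ i j : Fin N, i ≠ j →
      aeval (fun k : Fin N => if k = i then X j else X k) ψ = (0 : MvPolynomial (Fin N) ℂ)) :
    laughlin N ∣ ψ := by
  classical
  have sq : ∀ i j : Fin N, j ≠ i → (X i - X j : MvPolynomial (Fin N) ℂ) ^ 2 ∣ ψ := by
    intro i j hij
    obtain ⟨G, hG⟩ := dvd_of_vanish ψ hij (hvanish i j hij.symm)
    set τ : Equiv.Perm (Fin N) := Equiv.swap i j with hτ
    have hτψ := hsymm τ
    have h1 : (X i - X j) * G = (X j - X i) * rename (⇑τ) G := by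
      calc (X i - X j) * G = ψ := hG.symm
        _ = rename (⇑τ) ψ := hτψ.symm
        _ = rename (⇑τ) ((X i - X j) * G) := by rw [← hG]
        _ = (X j - X i) * rename (⇑τ) G := by
            rw [map_mul, map_sub, rename_X, rename_X, hτ, Equiv.swap_apply_left,
              Equiv.swap_apply_right]
    have hz : (X i - X j : MvPolynomial (Fin N) ℂ) ≠ 0 := (prime_X_sub_X hij).ne_zero
    have h2 : rename (⇑τ) G = -G := by
      have hzero : (X i - X j : MvPolynomial (Fin N) ℂ) * (G + rename (⇑τ) G) = 0 := by
        linear_combination h1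
      rcases mul_eq_zero.mp hzero with h | h
      · exact absurd h hz
      · linear_combination h
    set v : Fin N → MvPolynomial (Fin N) ℂ := fun k => if k = i then X j else X k with hv
    have hcomp : v ∘ ⇑τ = v := by
      funext k
      by_cases hk : k = i
      · subst hk
        simp [hv, hτ, Equiv.swap_apply_left, hij, hij.symm]
      · by_cases hk' : k = j
        · subst hk'
          simp [hv, hτ, Equiv.swap_apply_right, hij]
        · simp [hv, hτ, Equiv.swap_apply_of_ne_of_ne hk hk']
    have h3 : aeval v G = 0 := by
      have := congrArg (aeval v) h2
      rw [map_neg, aeval_rename, hcomp] at this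
      -- this : aeval v G = - aeval v G
      have h4 : (2 : MvPolynomial (Fin N) ℂ) * aeval v G = 0 := by linear_combination this
      rcases mul_eq_zero.mp h4 with h | h
      · exfalso
        have h5 := congrArg constantCoeff h
        rw [map_ofNat, map_zero] at h5
        norm_num at h5
      · exact h
    obtain ⟨H, hH⟩ := dvd_of_vanish G hij h3
    exact ⟨H, by rw [hG, hH]; ring⟩
  unfold laughlin
  refine prod_pow_dvd_of_primes _ _ 2 ψ ?_ ?_ ?_
  · intro p hp
    rw [Finset.mem_filter] at hp
    exact prime_X_sub_X (ne_of_gt hp.2)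
  · intro p hp q hq hpq
    rw [Finset.mem_filter] at hp hq
    exact not_dvd_pair hp.2 hq.2 hpq
  · intro p hp
    rw [Finset.mem_filter] at hp
    exact sq p.1 p.2 (ne_of_gt hp.2)
end
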